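/- Let S, Q ⊂ ℝⁿ be finite sets of m points each and g : S → Q a bijection with |p − g(p)| ≤ ε for every p ∈ S, where ε ≥ 0. Fix integers h, k ≥ 1 with m ≥ h+1 and k ≤ C(m−1, h). For j = 1, …, k let μ_j(S) be the mean over p ∈ S of the j-th smallest h-order average at p (over h-element subsets of S∖{p}), and define μ_j(Q) analogously. Then |μ_j(S) − μ_j(Q)| ≤ 2ε for every j; hence ‖μ(S) − μ(Q)‖_∞ ≤ 2ε and ‖μ(S) − μ(Q)‖_q ≤ 2ε·k^{1/q} for every q ∈ [1,∞). -/

import Mathlib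

open scoped Classical

/-- The h-order average of a point `p` together with a finite set `T` of
points: the mean `(2/(h(h+1))) Σ_{0≤i<j≤h} dist(p_i,p_j)` of all pairwise
distances among the `h+1` points `p, T` (for `T` of cardinality `h` not
containing `p`). -/
noncomputable def horderAvg {E : Type*} [PseudoMetricSpace E] (h : ℕ)
    (p : E) (T : Finset E) : ℝ :=
  2 / ((h : ℝ) * ((h : ℝ) + 1)) *
    ((∑ q ∈ T, dist p q) + (∑ q ∈ T, ∑ r ∈ T, dist q r) / 2)

/-- The `j`-th smallest h-order average at a point `p` of a finite set `S`:
the `j`-th entry of the list of the h-order averages `A(p,T)` over all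
`h`-element subsets `T` of `S∖{p}`, in increasing order with multiplicity. -/
noncomputable def ithAvg {E : Type*} [PseudoMetricSpace E] (h : ℕ)
    (S : Finset E) (p : E) (j : ℕ) : ℝ :=
  (Multiset.sort
    ((((S.erase p).powersetCard h).val).map (horderAvg h p)) (· ≤ ·)).getD (j - 1) 0


lemma sorted_getD_le_iff (l : List ℝ) (hl : l.Pairwise (· ≤ ·)) (j : ℕ) (hj : j < l.length)
    (x : ℝ) : l.getD j 0 ≤ x ↔ j + 1 ≤ l.countP (fun a => decide (a ≤ x)) := by
  have hget : l.getD j 0 = l[j] := List.getD_eq_getElem l 0 hj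
  constructor
  · intro hle
    have hsplit : l.countP (fun a => decide (a ≤ x)) =
        (l.take (j+1)).countP (fun a => decide (a ≤ x)) +
        (l.drop (j+1)).countP (fun a => decide (a ≤ x)) := by
      conv_lhs => rw [← List.take_append_drop (j+1) l]
      rw [List.countP_append]
    have htake : (l.take (j+1)).countP (fun a => decide (a ≤ x)) = j + 1 := by
      rw [List.countP_eq_length.2, List.length_take, min_eq_left (by omega)]
      intro a ha
      rw [List.mem_take_iff_getElem] at ha
      obtain ⟨i, hi, rfl⟩ := ha
      simp only [decide_eq_true_eq]
      have hij : i ≤ j := by omega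
      have h2 : l[i] ≤ l[j] := by
        rcases eq_or_lt_of_le hij with h | hij'
        · subst h; exact le_rfl
        · simpa using hl.rel_get_of_lt (a := ⟨i, by omega⟩) (b := ⟨j, hj⟩) hij'
      rw [hget] at hle
      exact le_trans h2 hle
    rw [hsplit, htake]
    exact Nat.le_add_right _ _
  · intro hcount
    by_contra hx
    push_neg at hx
    have hsplit : l.countP (fun a => decide (a ≤ x)) =
        (l.take j).countP (fun a => decide (a ≤ x)) +
        (l.drop j).countP (fun a => decide (a ≤ x)) := by
      conv_lhs => rw [← List.take_append_drop j l]
      rw [List.countP_append]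
    have hdrop : (l.drop j).countP (fun a => decide (a ≤ x)) = 0 := by
      rw [List.countP_eq_zero]
      intro a ha
      rw [List.mem_drop_iff_getElem] at ha
      obtain ⟨i, hi, rfl⟩ := ha
      simp only [decide_eq_true_eq, not_le]
      have : l[j] ≤ l[j+i] := by
        rcases Nat.eq_zero_or_pos i with rfl | hi0
        · simp
        · simpa using hl.rel_get_of_lt (a := ⟨j, hj⟩) (b := ⟨j+i, by omega⟩) (by simp [Fin.lt_def]; omega)
      calc x < l.getD j 0 := hx
        _ = l[j] := hget
        _ ≤ l[j+i] := this
    have htake : (l.take j).countP (fun a => decide (a ≤ x)) ≤ j := by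
      calc (l.take j).countP _ ≤ (l.take j).length := List.countP_le_length
        _ ≤ j := by rw [List.length_take]; omega
    have hle2 : l.countP (fun a => decide (a ≤ x)) ≤ j := by
      rw [hsplit, hdrop]
      simpa using htake
    exact Nat.lt_irrefl _ (lt_of_lt_of_le (Nat.lt_succ_of_le hle2) hcount)

lemma nth_le_iff (s : Multiset ℝ) (j : ℕ) (hj : j < Multiset.card s) (x : ℝ) :
    (Multiset.sort s (· ≤ ·)).getD j 0 ≤ x ↔ j + 1 ≤ s.countP (· ≤ x) := by
  have h1 : s.countP (· ≤ x) =
      (Multiset.sort s (· ≤ ·)).countP (fun a => decide (a ≤ x)) := by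
    conv_lhs => rw [← Multiset.sort_eq s (· ≤ ·)]
    rw [Multiset.coe_countP]
  rw [h1]
  exact sorted_getD_le_iff _ (Multiset.pairwise_sort _ _) j
    (by rwa [Multiset.length_sort]) x

lemma countP_le_of_rel (δ : ℝ) (s t : Multiset ℝ)
    (hrel : Multiset.Rel (fun a b => |a - b| ≤ δ) s t) (x : ℝ) :
    t.countP (· ≤ x) ≤ s.countP (· ≤ x + δ) := by
  induction hrel with
  | zero => simp
  | @cons a b s t hab _ ih =>
    rw [Multiset.countP_cons, Multiset.countP_cons]
    have : (if b ≤ x then 1 else 0) ≤ if a ≤ x + δ then 1 else 0 := by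
      split_ifs with h1 h2
      · rfl
      · exact absurd (by cases abs_le.1 hab; linarith) h2
      all_goals omega
    omega

lemma key_close (δ : ℝ) (s t : Multiset ℝ)
    (hrel : Multiset.Rel (fun a b => |a - b| ≤ δ) s t) (j : ℕ)
    (hj : j < Multiset.card s) :
    |(Multiset.sort s (· ≤ ·)).getD j 0 - (Multiset.sort t (· ≤ ·)).getD j 0| ≤ δ := by
  have hcard := Multiset.card_eq_card_of_rel hrel
  have hjt : j < Multiset.card t := hcard ▸ hj
  rw [abs_sub_le_iff]
  constructor
  · -- s_j ≤ t_j + δ : countP (· ≤ t_j + δ) s ≥ countP (· ≤ t_j) t ≥ j+1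
    rw [sub_le_iff_le_add, add_comm δ _, nth_le_iff s j hj]
    refine le_trans ?_ (countP_le_of_rel δ s t hrel _)
    rw [← nth_le_iff t j hjt]
  · rw [sub_le_iff_le_add, add_comm δ _, nth_le_iff t j hjt]
    refine le_trans ?_ (countP_le_of_rel δ t s (Multiset.rel_flip.2 (hrel.mono (by
      intro a _ b _ hab; rwa [abs_sub_comm]))) _)
    rw [← nth_le_iff s j hj]

lemma powersetCard_image {α β : Type*} [DecidableEq α] [DecidableEq β]
    (f : α → β) (s : Finset α) (hf : Set.InjOn f ↑s) (h : ℕ) :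
    (s.image f).powersetCard h = (s.powersetCard h).image (Finset.image f) := by
  classical
  ext T
  simp only [Finset.mem_powersetCard, Finset.mem_image]
  constructor
  · rintro ⟨hsub, hcard⟩
    have himg : (s.filter (fun x => f x ∈ T)).image f = T := by
      apply Finset.Subset.antisymm
      · intro y hy
        simp only [Finset.mem_image, Finset.mem_filter] at hy
        obtain ⟨x, ⟨_, hx2⟩, rfl⟩ := hy
        exact hx2
      · intro y hy
        obtain ⟨x, hx, rfl⟩ := Finset.mem_image.1 (hsub hy)
        exact Finset.mem_image.2 ⟨x, Finset.mem_filter.2 ⟨hx, hy⟩, rfl⟩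
    refine ⟨s.filter (fun x => f x ∈ T), ⟨Finset.filter_subset _ _, ?_⟩, himg⟩
    have := Finset.card_image_of_injOn (f := f) (s := s.filter (fun x => f x ∈ T))
      (hf.mono (by intro x hx; exact Finset.filter_subset _ _ hx))
    rw [himg] at this
    omega
  · rintro ⟨U, ⟨hUsub, hUcard⟩, rfl⟩
    refine ⟨Finset.image_subset_image hUsub, ?_⟩
    rw [Finset.card_image_of_injOn (hf.mono (by exact_mod_cast hUsub)), hUcard]

lemma powersetCard_image_val {α β : Type*} [DecidableEq α] [DecidableEq β]
    (f : α → β) (s : Finset α) (hf : Set.InjOn f ↑s) (h : ℕ) :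
    ((s.image f).powersetCard h).val = ((s.powersetCard h).val).map (Finset.image f) := by
  rw [powersetCard_image f s hf h]
  apply Finset.image_val_of_injOn
  intro U hU V hV hUV
  simp only [Finset.mem_coe, Finset.mem_powersetCard] at hU hV
  apply Finset.Subset.antisymm
  · intro x hx
    have : f x ∈ V.image f := hUV ▸ Finset.mem_image_of_mem f hx
    obtain ⟨y, hy, hyx⟩ := Finset.mem_image.1 this
    rwa [hf (hV.1 hy) (hU.1 hx) hyx] at hy
  · intro x hx
    have : f x ∈ U.image f := hUV ▸ Finset.mem_image_of_mem f hx
    obtain ⟨y, hy, hyx⟩ := Finset.mem_image.1 this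
    rwa [hf (hU.1 hy) (hV.1 hx) hyx] at hy
lemma horderAvg_close {E : Type*} [PseudoMetricSpace E] (h : ℕ) (hh : 1 ≤ h)
    (ε : ℝ) (hε : 0 ≤ ε) (p p' : E) (hp : dist p p' ≤ ε) (g : E → E)
    (T : Finset E) (hT : T.card = h) (hinj : Set.InjOn g ↑T)
    (hmove : ∀ q ∈ T, dist q (g q) ≤ ε) :
    |horderAvg h p T - horderAvg h p' (T.image g)| ≤ 2 * ε := by
  classical
  have hinj' : ∀ x ∈ T, ∀ y ∈ T, g x = g y → x = y := fun x hx y hy => hinj hx hy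
  have hA : ∑ q ∈ T.image g, dist p' q = ∑ q ∈ T, dist p' (g q) :=
    Finset.sum_image hinj'
  have hB : ∑ q ∈ T.image g, ∑ r ∈ T.image g, dist q r
      = ∑ q ∈ T, ∑ r ∈ T, dist (g q) (g r) := by
    rw [Finset.sum_image hinj']
    exact Finset.sum_congr rfl fun q _ => Finset.sum_image hinj'
  rw [horderAvg, horderAvg, hA, hB]
  have hhr : (1:ℝ) ≤ (h:ℝ) := by exact_mod_cast hh
  have hcpos : 0 < (h:ℝ) * ((h:ℝ)+1) := by nlinarith
  have hc0 : 0 ≤ 2 / ((h : ℝ) * ((h : ℝ) + 1)) := by positivity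
  rw [← mul_sub, abs_mul, abs_of_nonneg hc0]
  have hAbound : |(∑ q ∈ T, dist p q) - ∑ q ∈ T, dist p' (g q)| ≤ 2 * ε * h := by
    rw [← Finset.sum_sub_distrib]
    refine (Finset.abs_sum_le_sum_abs _ _).trans ?_
    have hterm : ∀ q ∈ T, |dist p q - dist p' (g q)| ≤ 2 * ε := by
      intro q hq
      have h1 := dist_dist_dist_le p q p' (g q)
      rw [Real.dist_eq] at h1
      have h2 := hmove q hq
      linarith
    calc ∑ q ∈ T, |dist p q - dist p' (g q)| ≤ ∑ _q ∈ T, 2*ε := Finset.sum_le_sum hterm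
      _ = 2*ε*h := by rw [Finset.sum_const, hT, nsmul_eq_mul]; ring
  have hBbound : |(∑ q ∈ T, ∑ r ∈ T, dist q r) - ∑ q ∈ T, ∑ r ∈ T, dist (g q) (g r)|
      ≤ 2*ε*h*h - 2*ε*h := by
    rw [← Finset.sum_sub_distrib]
    refine (Finset.abs_sum_le_sum_abs _ _).trans ?_
    have hterm : ∀ q ∈ T, |(∑ r ∈ T, dist q r) - ∑ r ∈ T, dist (g q) (g r)|
        ≤ 2*ε*h - 2*ε := by
      intro q hq
      rw [← Finset.sum_sub_distrib]
      refine (Finset.abs_sum_le_sum_abs _ _).trans ?_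
      have hterm2 : ∀ r ∈ T, |dist q r - dist (g q) (g r)|
          ≤ if q = r then 0 else 2*ε := by
        intro r hr
        split_ifs with hqr
        · subst hqr; simp
        · have h1 := dist_dist_dist_le q r (g q) (g r)
          rw [Real.dist_eq] at h1
          have h2 := hmove q hq
          have h3 := hmove r hr
          linarith
      refine (Finset.sum_le_sum hterm2).trans ?_
      have : ∑ r ∈ T, (if q = r then (0:ℝ) else 2*ε)
          = ∑ r ∈ T, (2*ε - if q = r then 2*ε else 0) := by
        refine Finset.sum_congr rfl fun r _ => by split_ifs <;> ring
      rw [this, Finset.sum_sub_distrib, Finset.sum_const, hT, Finset.sum_ite_eq,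
        if_pos hq, nsmul_eq_mul]
      ring_nf
      exact le_refl _
    calc ∑ q ∈ T, |(∑ r ∈ T, dist q r) - ∑ r ∈ T, dist (g q) (g r)|
        ≤ ∑ _q ∈ T, (2*ε*h - 2*ε) := Finset.sum_le_sum hterm
      _ = 2*ε*h*h - 2*ε*h := by rw [Finset.sum_const, hT, nsmul_eq_mul]; ring
  have habs : |(∑ q ∈ T, dist p q) + (∑ q ∈ T, ∑ r ∈ T, dist q r) / 2
      - ((∑ q ∈ T, dist p' (g q)) + (∑ q ∈ T, ∑ r ∈ T, dist (g q) (g r)) / 2)|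
      ≤ ε * h * (h + 1) := by
    have := abs_add_le ((∑ q ∈ T, dist p q) - ∑ q ∈ T, dist p' (g q))
      (((∑ q ∈ T, ∑ r ∈ T, dist q r) - ∑ q ∈ T, ∑ r ∈ T, dist (g q) (g r)) / 2)
    rw [abs_div] at this
    have h2 : |(2:ℝ)| = 2 := by norm_num
    calc _ ≤ _ := by
            refine le_trans (le_of_eq ?_) this
            congr 1
            ring
      _ ≤ ε * h * (h+1) := by rw [h2] at this ⊢; nlinarith [hAbound, hBbound]
  calc 2 / ((h : ℝ) * ((h : ℝ) + 1)) * |_| ≤ 2 / ((h : ℝ) * ((h : ℝ) + 1)) * (ε * h * (h+1)) :=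
        mul_le_mul_of_nonneg_left habs hc0
    _ = 2 * ε := by field_simp

/-- Let `g : S → Q` be a bijection between `m`-point subsets of
`ℝⁿ` moving every point by at most `ε`, `h, k ≥ 1` with `m ≥ h+1` and
`k ≤ C(m−1,h)`. For `j = 1,…,k` let `μⱼ(S)` be the mean over `p ∈ S` of the
`j`-th smallest h-order average at `p` and similarly for `Q`. Then
`|μⱼ(S) − μⱼ(Q)| ≤ 2ε` for every `j` (hence `‖μ(S) − μ(Q)‖∞ ≤ 2ε`), and
`‖μ(S) − μ(Q)‖_q ≤ 2ε·k^(1/q)` for every `q ∈ [1,∞)`. -/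
theorem stmt_12 (n h k m : ℕ) (hn : 1 ≤ n) (hh : 1 ≤ h) (hk : 1 ≤ k)
    (hm : h + 1 ≤ m) (hkC : k ≤ (m - 1).choose h) (ε : ℝ) (hε : 0 ≤ ε)
    (S Q : Finset (EuclideanSpace ℝ (Fin n))) (hScard : S.card = m) (hQcard : Q.card = m)
    (g : EuclideanSpace ℝ (Fin n) → EuclideanSpace ℝ (Fin n))
    (hg : Set.BijOn g ↑S ↑Q) (hclose : ∀ p ∈ S, dist p (g p) ≤ ε)
    (μS μQ : Fin k → ℝ)
    (hμS : ∀ j : Fin k, μS j = (∑ p ∈ S, ithAvg h S p (j.1 + 1)) / (m : ℝ))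
    (hμQ : ∀ j : Fin k, μQ j = (∑ p ∈ Q, ithAvg h Q p (j.1 + 1)) / (m : ℝ)) :
    (∀ j : Fin k, |μS j - μQ j| ≤ 2 * ε) ∧
    (∀ q : ℝ, 1 ≤ q →
      (∑ j : Fin k, |μS j - μQ j| ^ q) ^ (1 / q) ≤ 2 * ε * (k : ℝ) ^ (1 / q)) := by
  classical
  have hm0 : (0:ℝ) < (m:ℝ) := by
    have : 2 ≤ m := by omega
    exact_mod_cast (by omega : 0 < m)
  -- per point bound
  have hpoint : ∀ p ∈ S, ∀ j : Fin k,
      |ithAvg h S p (j.1 + 1) - ithAvg h Q (g p) (j.1 + 1)| ≤ 2 * ε := by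
    intro p hp j
    have hpS : p ∈ S := hp
    have hgpQ : g p ∈ Q := hg.mapsTo hpS
    -- erase equality
    have herase : Q.erase (g p) = (S.erase p).image g := by
      ext q
      simp only [Finset.mem_erase, Finset.mem_image]
      constructor
      · rintro ⟨hne, hq⟩
        obtain ⟨x, hx, rfl⟩ := hg.surjOn hq
        refine ⟨x, ⟨?_, hx⟩, rfl⟩
        rintro rfl; exact hne rfl
      · rintro ⟨x, ⟨hxne, hxS⟩, rfl⟩
        exact ⟨fun hgx => hxne (hg.injOn hxS hpS hgx), hg.mapsTo hxS⟩
    have hinjS : Set.InjOn g ↑(S.erase p) :=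
      hg.injOn.mono (by intro x hx; exact Finset.mem_of_mem_erase hx)
    have hval : ((Q.erase (g p)).powersetCard h).val
        = (((S.erase p).powersetCard h).val).map (Finset.image g) := by
      rw [herase]; exact powersetCard_image_val g (S.erase p) hinjS h
    have hrel : Multiset.Rel (fun a b => |a - b| ≤ 2 * ε)
        ((((S.erase p).powersetCard h).val).map (horderAvg h p))
        ((((Q.erase (g p)).powersetCard h).val).map (horderAvg h (g p))) := by
      rw [hval, Multiset.map_map, Multiset.rel_map]
      refine Multiset.rel_refl_of_refl_on ?_
      intro T hT
      have hTmem : T ∈ (S.erase p).powersetCard h := hT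
      obtain ⟨hTsub, hTcard⟩ := Finset.mem_powersetCard.1 hTmem
      have hTS : ∀ x ∈ T, x ∈ S := fun x hx => Finset.mem_of_mem_erase (hTsub hx)
      rw [Function.comp_apply]
      convert horderAvg_close h hh ε hε p (g p) (hclose p hpS) g T hTcard
        (hg.injOn.mono (by intro x hx; exact hTS x hx))
        (fun q hq => hclose q (hTS q hq))
    have hcard : Multiset.card ((((S.erase p).powersetCard h).val).map (horderAvg h p))
        = (m - 1).choose h := by
      rw [Multiset.card_map]
      have : ((S.erase p).powersetCard h).val.card = ((S.erase p).powersetCard h).card := rfl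
      rw [this, Finset.card_powersetCard, Finset.card_erase_of_mem hpS, hScard]
    have hj : (j.1 + 1) - 1 < Multiset.card
        ((((S.erase p).powersetCard h).val).map (horderAvg h p)) := by
      rw [hcard]; have := j.2; omega
    have := key_close (2*ε) _ _ hrel ((j.1+1)-1) hj
    unfold ithAvg; rw [Nat.add_sub_cancel] at this ⊢; convert this
  -- sum over Q = sum over S ∘ g
  have hsum : ∀ j : Fin k, ∑ q ∈ Q, ithAvg h Q q (j.1 + 1)
      = ∑ p ∈ S, ithAvg h Q (g p) (j.1 + 1) := by
    intro j
    refine (Finset.sum_bij (fun p (hp : p ∈ S) => g p) (fun p hp => hg.mapsTo hp)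
      (fun a ha b hb hab => hg.injOn ha hb hab) ?_ (fun p hp => rfl)).symm
    intro q hq
    obtain ⟨x, hx, rfl⟩ := hg.surjOn hq
    exact ⟨x, hx, rfl⟩
  have part1 : ∀ j : Fin k, |μS j - μQ j| ≤ 2 * ε := by
    intro j
    rw [hμS j, hμQ j, hsum j, div_sub_div_same, ← Finset.sum_sub_distrib, abs_div,
      abs_of_pos hm0, div_le_iff₀ hm0]
    calc |∑ p ∈ S, (ithAvg h S p (j.1+1) - ithAvg h Q (g p) (j.1+1))|
        ≤ ∑ p ∈ S, |ithAvg h S p (j.1+1) - ithAvg h Q (g p) (j.1+1)| :=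
          Finset.abs_sum_le_sum_abs _ _
      _ ≤ ∑ _p ∈ S, 2*ε := Finset.sum_le_sum (fun p hp => hpoint p hp j)
      _ = 2*ε*m := by rw [Finset.sum_const, hScard, nsmul_eq_mul]; ring
  refine ⟨part1, ?_⟩
  intro q hq
  have hq0 : q ≠ 0 := by linarith
  have hq0' : 0 ≤ q := by linarith
  have h2ε : (0:ℝ) ≤ 2*ε := by linarith
  have hterm : ∀ j : Fin k, |μS j - μQ j| ^ q ≤ (2*ε) ^ q := by
    intro j
    exact Real.rpow_le_rpow (abs_nonneg _) (part1 j) hq0'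
  have hsum2 : (∑ j : Fin k, |μS j - μQ j| ^ q) ≤ (k:ℝ) * (2*ε) ^ q := by
    calc (∑ j : Fin k, |μS j - μQ j| ^ q) ≤ ∑ _j : Fin k, (2*ε) ^ q :=
          Finset.sum_le_sum (fun j _ => hterm j)
      _ = (k:ℝ) * (2*ε)^q := by
          rw [Finset.sum_const, Finset.card_univ, Fintype.card_fin, nsmul_eq_mul]
  have hsumnn : 0 ≤ ∑ j : Fin k, |μS j - μQ j| ^ q :=
    Finset.sum_nonneg (fun j _ => Real.rpow_nonneg (abs_nonneg _) q)
  calc (∑ j : Fin k, |μS j - μQ j| ^ q) ^ (1/q)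
      ≤ ((k:ℝ) * (2*ε)^q) ^ (1/q) :=
        Real.rpow_le_rpow hsumnn hsum2 (by positivity)
    _ = (k:ℝ)^(1/q) * ((2*ε)^q)^(1/q) :=
        Real.mul_rpow (by positivity) (Real.rpow_nonneg h2ε q)
    _ = (k:ℝ)^(1/q) * (2*ε) := by
        rw [← Real.rpow_mul h2ε, mul_one_div, div_self hq0, Real.rpow_one]
    _ = 2 * ε * (k:ℝ)^(1/q) := by ring
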